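/- In the voting-model platform game, if platform q^A is a best response of party A to q^B, then the two groups' relative policy evaluations cannot be tied: E_{ν^{SP}}[U^{SP}(q^A)] − E_{ν^{SP}}[U^{SP}(q^B)] ≠ E_{ν^{SC}}[U^{SC}(q^A)] − E_{ν^{SC}}[U^{SC}(q^B)]; in particular, any best response satisfies q^A ≠ q^B. -/

import Mathlib

/-- In the voting-model platform game, groups `SP, SC` have
ideal cultural policies `xSP > xSC`, economic beliefs `νSP, νSC ∈ [0,1]`,
shares `sSP ∈ (0,1)` and `1 − sSP`; the expected utility of group `G` from a
platform `q = (x,y)` is `−(x − x^G)² − (y − ν^G)² − ν^G(1 − ν^G)`; the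
popularity shock is uniform on `[−φ, φ]` with `φ > 1 + (xSP − xSC)²`, a group
votes for `A` iff its expected-utility difference exceeds the shock, and
party `A`'s expected payoff is the expectation of `v` (strictly increasing on
`[0,1]`, strictly concave, `v 0 = 0`, `v 1 = 1`) of its vote share. If
platform `qA` is a best response to `qB`, then the two groups' relative
policy evaluations are not tied, and in particular `qA ≠ qB`. -/
theorem best_response_breaks_ties
    (v : ℝ → ℝ)
    (hmono : StrictMonoOn v (Set.Icc 0 1))
    (hconc : StrictConcaveOn ℝ (Set.Icc 0 1) v)
    (hv0 : v 0 = 0) (hv1 : v 1 = 1)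
    (xSP xSC sSP φ νSP νSC : ℝ)
    (hx : xSP > xSC) (hs : sSP ∈ Set.Ioo (0:ℝ) 1)
    (hνSP : νSP ∈ Set.Icc (0:ℝ) 1) (hνSC : νSC ∈ Set.Icc (0:ℝ) 1)
    (hφ : φ > 1 + (xSP - xSC) ^ 2)
    (qA qB : ℝ × ℝ) :
    let EUSP : ℝ × ℝ → ℝ := fun q =>
      -(q.1 - xSP) ^ 2 - (q.2 - νSP) ^ 2 - νSP * (1 - νSP)
    let EUSC : ℝ × ℝ → ℝ := fun q =>
      -(q.1 - xSC) ^ 2 - (q.2 - νSC) ^ 2 - νSC * (1 - νSC)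
    let dSP : ℝ × ℝ → ℝ × ℝ → ℝ := fun q q' => EUSP q - EUSP q'
    let dSC : ℝ × ℝ → ℝ × ℝ → ℝ := fun q q' => EUSC q - EUSC q'
    -- expected payoff of A against qB: vote share is 1 below both
    -- thresholds, the advantaged group's share in between, 0 above both
    let VA : ℝ × ℝ → ℝ × ℝ → ℝ := fun q q' =>
      (φ + min (dSP q q') (dSC q q')) / (2 * φ)
        + (if dSP q q' ≥ dSC q q'
            then (dSP q q' - dSC q q') * v sSP
            else (dSC q q' - dSP q q') * v (1 - sSP)) / (2 * φ)
    (∀ q : ℝ × ℝ, VA q qB ≤ VA qA qB) →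
      dSP qA qB ≠ dSC qA qB ∧ qA ≠ qB := by
  intro EUSP EUSC dSP dSC VA hbr
  have hφ0 : (0:ℝ) < φ := by nlinarith [sq_nonneg (xSP - xSC)]
  have h2φ : (0:ℝ) < 2 * φ := by linarith
  have hΔ : 0 < xSP - xSC := sub_pos.2 hx
  obtain ⟨hs0, hs1⟩ := hs
  have hmem0 : (0:ℝ) ∈ Set.Icc (0:ℝ) 1 := by norm_num
  have hmem1 : (1:ℝ) ∈ Set.Icc (0:ℝ) 1 := by norm_num
  have ha : sSP < v sSP := by
    have h := hconc.2 hmem0 hmem1 (by norm_num) (sub_pos.2 hs1) hs0 (by ring)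
    simp only [smul_eq_mul] at h
    have harg : (1 - sSP) * (0:ℝ) + sSP * 1 = sSP := by ring
    rw [harg, hv0, hv1] at h; linarith
  have hb : 1 - sSP < v (1 - sSP) := by
    have h := hconc.2 hmem0 hmem1 (by norm_num) hs0 (sub_pos.2 hs1) (by ring)
    simp only [smul_eq_mul] at h
    have harg : sSP * (0:ℝ) + (1 - sSP) * 1 = 1 - sSP := by ring
    rw [harg, hv0, hv1] at h; linarith
  set a := v sSP with ha'
  set b := v (1 - sSP) with hb'
  have hab : 1 < a + b := by linarith
  have key : dSP qA qB ≠ dSC qA qB := by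
    intro htie
    have hgeA : dSP qA qB ≥ dSC qA qB := le_of_eq htie.symm
    have hminA : min (dSP qA qB) (dSC qA qB) = dSC qA qB := min_eq_right hgeA
    rcases lt_or_ge (qA.1 - xSC) ((xSP - xSC) * a) with hc | hc
    · -- deviate to the right
      set t := (xSP - xSC) * a - (qA.1 - xSC) with ht'
      have ht : 0 < t := by simp only [ht']; linarith
      set q : ℝ × ℝ := (qA.1 + t, qA.2) with hq
      have h1 : dSP q qB = dSP qA qB - 2 * (qA.1 - xSP) * t - t ^ 2 := by
        simp only [dSP, EUSP, hq]; ring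
      have h2 : dSC q qB = dSC qA qB - 2 * (qA.1 - xSC) * t - t ^ 2 := by
        simp only [dSC, EUSC, hq]; ring
      have hge : dSP q qB ≥ dSC q qB := by
        rw [h1, h2, htie]; nlinarith
      have hmin : min (dSP q qB) (dSC q qB) = dSC q qB := min_eq_right hge
      have hbr' := hbr q
      simp only [VA, hmin, hminA, if_pos hge, if_pos hgeA] at hbr'
      rw [← add_div, ← add_div, div_le_div_iff_of_pos_right h2φ] at hbr'
      rw [h1, h2, htie] at hbr'
      nlinarith [mul_pos ht ht]
    · -- deviate to the left
      have hc2 : 0 < (qA.1 - xSP) + (xSP - xSC) * b := by nlinarith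
      set t := -((qA.1 - xSP) + (xSP - xSC) * b) with ht'
      have ht : t < 0 := by simp only [ht']; linarith
      set q : ℝ × ℝ := (qA.1 + t, qA.2) with hq
      have h1 : dSP q qB = dSP qA qB - 2 * (qA.1 - xSP) * t - t ^ 2 := by
        simp only [dSP, EUSP, hq]; ring
      have h2 : dSC q qB = dSC qA qB - 2 * (qA.1 - xSC) * t - t ^ 2 := by
        simp only [dSC, EUSC, hq]; ring
      have hlt : dSP q qB < dSC q qB := by
        rw [h1, h2, htie]; nlinarith
      have hmin : min (dSP q qB) (dSC q qB) = dSP q qB := min_eq_left (le_of_lt hlt)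
      have hbr' := hbr q
      simp only [VA, hmin, hminA, if_neg (not_le.mpr hlt), if_pos hgeA] at hbr'
      rw [← add_div, ← add_div, div_le_div_iff_of_pos_right h2φ] at hbr'
      rw [h1, h2, htie] at hbr'
      nlinarith [mul_pos (neg_pos.mpr ht) (neg_pos.mpr ht)]
  refine ⟨key, fun h => key ?_⟩
  rw [h]
  simp only [dSP, dSC, sub_self]
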